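/- First-order optimality characterization of the geometric softmax: assume the kernel matrix K = (exp(−c_{ij}/2))_{i,j} is positive definite and let f ∈ ℝ^d. A point α ∈ △^d equals g-softmax(f) (the unique minimizer of Φ_C(·,f) over △^d) if and only if there exists a constant A ∈ ℝ such that (f_i + T(−f,α)_i)/2 = A for all i with α_i > 0 and (f_i + T(−f,α)_i)/2 ≤ A for all i with α_i = 0; moreover, in that case A = Ω_C^*(f). -/

import Mathlib

open Finset Real Filter

noncomputable section

/-- The probability simplex in `ℝ^d`. -/
def simplexS (d : ℕ) : Set (Fin d → ℝ) := stdSimplex ℝ (Fin d)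


open scoped Classical

/-- `Φ_C(α,f) = Σ_{i,j} α_i α_j exp(-(f_i + f_j + c_{ij})/2)`. -/
def Phi {d : ℕ} (C : Matrix (Fin d) (Fin d) ℝ) (α f : Fin d → ℝ) : ℝ :=
  ∑ i, ∑ j, α i * α j * Real.exp (-(f i + f j + C i j) / 2)

/-- The geometric log-sum-exp `Ω_C^*(f) = -log min_{α ∈ △^d} Φ_C(α, f)`. -/
def OmegaStar {d : ℕ} (C : Matrix (Fin d) (Fin d) ℝ) (f : Fin d → ℝ) : ℝ :=
  -Real.log (sInf ((fun α => Phi C α f) '' simplexS d))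

/-- The geometric softmax: the (unique, when the kernel is positive definite) minimizer of
`Φ_C(·, f)` over the simplex. -/
def gsoftmax {d : ℕ} (C : Matrix (Fin d) (Fin d) ℝ) (f : Fin d → ℝ) : Fin d → ℝ :=
  if h : ∃ α ∈ simplexS d, IsMinOn (fun β => Phi C β f) (simplexS d) α
  then h.choose else fun _ => 0

/-- The soft C-transform `T(f,α)_i = -2 log Σ_j α_j exp((f_j - c_{ij})/2)`. -/
def Tsoft {d : ℕ} (C : Matrix (Fin d) (Fin d) ℝ) (f α : Fin d → ℝ) : Fin d → ℝ :=
  fun i => -2 * Real.log (∑ j, α j * Real.exp ((f j - C i j) / 2))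

/-- `f` is the symmetric Sinkhorn potential of `α`: `-f = T(-f, α)`. -/
def IsSinkhornPotential {d : ℕ} (C : Matrix (Fin d) (Fin d) ℝ) (α f : Fin d → ℝ) : Prop :=
  -f = Tsoft C (-f) α

/-- The symmetric Sinkhorn potential `∇Ω(α)`: the (unique, when the kernel is positive
definite) `f` with `-f = T(-f, α)`. -/
def gradOmega {d : ℕ} (C : Matrix (Fin d) (Fin d) ℝ) (α : Fin d → ℝ) : Fin d → ℝ :=
  if h : ∃ f : Fin d → ℝ, IsSinkhornPotential C α f then h.choose else fun _ => 0

/-- The extrapolation `f^E = -T(-(f - Ω_C^*(f)·1), g-softmax(f)) + Ω_C^*(f)·1`. -/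
def extrap {d : ℕ} (C : Matrix (Fin d) (Fin d) ℝ) (f : Fin d → ℝ) : Fin d → ℝ :=
  fun i => -(Tsoft C (fun j => -(f j - OmegaStar C f)) (gsoftmax C f) i) + OmegaStar C f

/-- The kernel matrix `K = (exp(-c_{ij}/2))_{ij}`. -/
def kernelK {d : ℕ} (C : Matrix (Fin d) (Fin d) ℝ) : Matrix (Fin d) (Fin d) ℝ :=
  Matrix.of fun i j => Real.exp (-(C i j) / 2)

namespace GsoftmaxAux

variable {d : ℕ} (C : Matrix (Fin d) (Fin d) ℝ) (f : Fin d → ℝ)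

def wv : Fin d → ℝ := fun i => Real.exp (-f i / 2)

def Sv (α : Fin d → ℝ) : Fin d → ℝ :=
  fun i => ∑ j, α j * (wv f j * Real.exp (-(C i j) / 2))

def Bq (x y : Fin d → ℝ) : ℝ :=
  ∑ i, ∑ j, x i * y j * (wv f i * (wv f j * Real.exp (-(C i j) / 2)))

lemma wv_pos (i : Fin d) : 0 < wv f i := Real.exp_pos _

lemma phi_eq (α : Fin d → ℝ) : Phi C α f = Bq C f α α := by
  unfold Phi Bq wv
  refine Finset.sum_congr rfl fun i _ => Finset.sum_congr rfl fun j _ => ?_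
  have h : -(f i + f j + C i j) / 2 = -f i / 2 + (-f j / 2 + -(C i j) / 2) := by ring
  rw [h, Real.exp_add, Real.exp_add]

lemma Bq_symm (hCsym : C.IsSymm) (x y : Fin d → ℝ) : Bq C f x y = Bq C f y x := by
  unfold Bq
  rw [Finset.sum_comm]
  refine Finset.sum_congr rfl fun a _ => Finset.sum_congr rfl fun b _ => ?_
  rw [hCsym.apply a b]
  ring

lemma Bq_add (x y : Fin d → ℝ) :
    Bq C f (x + y) (x + y) = Bq C f x x + Bq C f x y + Bq C f y x + Bq C f y y := by
  unfold Bq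
  simp only [Pi.add_apply, ← Finset.sum_add_distrib]
  refine Finset.sum_congr rfl fun i _ => Finset.sum_congr rfl fun j _ => by ring

lemma Bq_smul_left (c : ℝ) (x y : Fin d → ℝ) : Bq C f (c • x) y = c * Bq C f x y := by
  unfold Bq
  rw [Finset.mul_sum]
  refine Finset.sum_congr rfl fun i _ => ?_
  rw [Finset.mul_sum]
  refine Finset.sum_congr rfl fun j _ => ?_
  simp only [Pi.smul_apply, smul_eq_mul]; ring

lemma Bq_smul_right (c : ℝ) (x y : Fin d → ℝ) : Bq C f x (c • y) = c * Bq C f x y := by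
  unfold Bq
  rw [Finset.mul_sum]
  refine Finset.sum_congr rfl fun i _ => ?_
  rw [Finset.mul_sum]
  refine Finset.sum_congr rfl fun j _ => ?_
  simp only [Pi.smul_apply, smul_eq_mul]; ring

lemma Bq_right (hCsym : C.IsSymm) (x y : Fin d → ℝ) :
    Bq C f x y = ∑ j, y j * (wv f j * Sv C f x j) := by
  unfold Bq Sv
  rw [Finset.sum_comm]
  refine Finset.sum_congr rfl fun j _ => ?_
  rw [Finset.mul_sum, Finset.mul_sum]
  refine Finset.sum_congr rfl fun i _ => ?_
  rw [hCsym.apply i j]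
  ring

lemma Sv_pos {α : Fin d → ℝ} (hα : α ∈ simplexS d) (i : Fin d) : 0 < Sv C f α i := by
  obtain ⟨hnn, hsum⟩ := hα
  have hne : ∃ j, α j ≠ 0 := by
    by_contra h
    push_neg at h
    simp [h] at hsum
  obtain ⟨j0, hj0⟩ := hne
  refine Finset.sum_pos' (fun j _ => mul_nonneg (hnn j) (mul_pos (wv_pos f j) (Real.exp_pos _)).le) ?_
  exact ⟨j0, Finset.mem_univ _, mul_pos ((hnn j0).lt_of_ne (Ne.symm hj0))
    (mul_pos (wv_pos f j0) (Real.exp_pos _))⟩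

lemma Tsoft_eq {α : Fin d → ℝ} (hα : α ∈ simplexS d) (i : Fin d) :
    (f i + Tsoft C (-f) α i) / 2 = -Real.log (wv f i * Sv C f α i) := by
  have hS := Sv_pos C f hα i
  have h1 : (∑ j, α j * Real.exp (((-f) j - C i j) / 2)) = Sv C f α i := by
    unfold Sv wv
    refine Finset.sum_congr rfl fun j _ => ?_
    have h : ((-f) j - C i j) / 2 = -f j / 2 + -(C i j) / 2 := by
      simp only [Pi.neg_apply]; ring
    rw [h, Real.exp_add]
  unfold Tsoft
  rw [h1, Real.log_mul (ne_of_gt (wv_pos f i)) (ne_of_gt hS)]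
  have h2 : Real.log (wv f i) = -f i / 2 := Real.log_exp _
  rw [h2]
  ring

lemma Bq_pos (hK : (kernelK C).PosDef) {v : Fin d → ℝ} (hv : v ≠ 0) : 0 < Bq C f v v := by
  set x : Fin d → ℝ := fun i => v i * wv f i with hx
  have hxne : x ≠ 0 := by
    obtain ⟨k, hk⟩ := Function.ne_iff.mp hv
    refine Function.ne_iff.mpr ⟨k, ?_⟩
    simp only [hx, Pi.zero_apply] at hk ⊢
    exact mul_ne_zero hk (ne_of_gt (wv_pos f k))
  have h := hK.dotProduct_mulVec_pos hxne
  have heq : dotProduct (star x) ((kernelK C).mulVec x) = Bq C f v v := by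
    rw [star_trivial]
    unfold Bq
    rw [dotProduct]
    refine Finset.sum_congr rfl fun i _ => ?_
    rw [Matrix.mulVec, dotProduct, Finset.mul_sum]
    refine Finset.sum_congr rfl fun j _ => ?_
    simp only [hx, kernelK, Matrix.of_apply]
    ring
  rwa [heq] at h

lemma phi_pos (hK : (kernelK C).PosDef) {α : Fin d → ℝ} (hα : α ∈ simplexS d) :
    0 < Phi C α f := by
  rw [phi_eq]
  refine Bq_pos C f hK ?_
  intro h0
  have := hα.2
  rw [h0] at this
  simp at this

lemma mem_simplex_iff {α : Fin d → ℝ} :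
    α ∈ simplexS d ↔ (∀ i, 0 ≤ α i) ∧ ∑ i, α i = 1 := Iff.rfl

/-- At a minimizer, moving mass from a support point `i` to any `j` can't help. -/
lemma grad_le_of_min (hCsym : C.IsSymm) {α : Fin d → ℝ} (hα : α ∈ simplexS d)
    (hmin : IsMinOn (fun β => Phi C β f) (simplexS d) α) {i j : Fin d} (hi : 0 < α i) :
    wv f i * Sv C f α i ≤ wv f j * Sv C f α j := by
  by_cases hij : i = j
  · subst hij; exact le_refl _
  set g : Fin d → ℝ := fun k => wv f k * Sv C f α k with hg
  set u : Fin d → ℝ := fun k => (if k = j then (1:ℝ) else 0) - (if k = i then 1 else 0) with hu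
  have hBu : Bq C f α u = g j - g i := by
    rw [Bq_right C f hCsym]
    simp only [hu, sub_mul, Finset.sum_sub_distrib, ite_mul, one_mul, zero_mul,
      Finset.sum_ite_eq', Finset.mem_univ, if_true, hg]
  have key : ∀ ε : ℝ, 0 < ε → ε ≤ α i → 0 ≤ 2 * ε * (g j - g i) + ε ^ 2 * Bq C f u u := by
    intro ε hε hεi
    have hmem : α + ε • u ∈ simplexS d := by
      refine ⟨fun k => ?_, ?_⟩
      · simp only [Pi.add_apply, Pi.smul_apply, smul_eq_mul, hu]
        by_cases hk : k = i
        · subst hk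
          simp only [if_neg hij, if_pos rfl, if_true, eq_self_iff_true]
          have := hα.1 k
          nlinarith
        · by_cases hk' : k = j
          · subst hk'
            simp only [if_pos rfl, if_neg hk, if_true, eq_self_iff_true]
            have := hα.1 k
            nlinarith
          · simp only [if_neg hk', if_neg hk]
            have := hα.1 k
            nlinarith
      · simp only [Pi.add_apply, Pi.smul_apply, smul_eq_mul, hu]
        rw [Finset.sum_add_distrib, hα.2, ← Finset.mul_sum]
        simp [Finset.sum_sub_distrib]
    have hle := isMinOn_iff.mp hmin _ hmem
    have hexp : Phi C (α + ε • u) f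
        = Phi C α f + 2 * ε * (g j - g i) + ε ^ 2 * Bq C f u u := by
      rw [phi_eq, Bq_add, Bq_smul_right C f ε α u, Bq_smul_left C f ε u α,
        Bq_smul_left C f ε u (ε • u), Bq_smul_right C f ε u u,
        Bq_symm C f hCsym u α, hBu, ← phi_eq]
      ring
    rw [hexp] at hle
    linarith
  by_contra hlt
  push_neg at hlt
  set δ : ℝ := g i - g j with hδ
  have hδpos : 0 < δ := sub_pos.mpr hlt
  set c : ℝ := Bq C f u u with hc
  set ε : ℝ := min (α i) (δ / (|c| + 1)) with hε
  have habs : 0 < |c| + 1 := by positivity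
  have hεpos : 0 < ε := lt_min hi (by positivity)
  have h1 := key ε hεpos (min_le_left _ _)
  have h2 : ε ≤ δ / (|c| + 1) := min_le_right _ _
  have h3 : ε * (|c| + 1) ≤ δ := (le_div_iff₀ habs).mp h2
  have h4 : c ≤ |c| := le_abs_self c
  nlinarith [sq_nonneg ε, mul_pos hεpos hδpos, mul_pos hεpos hεpos]

/-- A minimizer satisfies the KKT conditions with value `Phi C α f`. -/
lemma min_char (hCsym : C.IsSymm) {α : Fin d → ℝ} (hα : α ∈ simplexS d)
    (hmin : IsMinOn (fun β => Phi C β f) (simplexS d) α) :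
    (∀ i, 0 < α i → wv f i * Sv C f α i = Phi C α f) ∧
      (∀ j, α j = 0 → Phi C α f ≤ wv f j * Sv C f α j) := by
  have hne : ∃ i0, 0 < α i0 := by
    by_contra h
    push_neg at h
    have : ∀ i, α i = 0 := fun i => le_antisymm (h i) (hα.1 i)
    have h2 := hα.2
    simp [this] at h2
  obtain ⟨i0, hi0⟩ := hne
  have hconst : ∀ i, 0 < α i → wv f i * Sv C f α i = wv f i0 * Sv C f α i0 := fun i hi =>
    le_antisymm (grad_le_of_min C f hCsym hα hmin hi) (grad_le_of_min C f hCsym hα hmin hi0)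
  have hsum : Phi C α f = wv f i0 * Sv C f α i0 := by
    rw [phi_eq, Bq_right C f hCsym]
    have : ∀ k ∈ Finset.univ, α k * (wv f k * Sv C f α k)
        = α k * (wv f i0 * Sv C f α i0) := by
      intro k _
      rcases (hα.1 k).eq_or_lt with h | h
      · rw [← h]; ring
      · rw [hconst k h]
    rw [Finset.sum_congr rfl this, ← Finset.sum_mul, hα.2, one_mul]
  refine ⟨fun i hi => by rw [hconst i hi, hsum], fun j hj => ?_⟩
  rw [hsum]
  exact grad_le_of_min C f hCsym hα hmin hi0

/-- KKT conditions imply strict global minimality. -/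
lemma min_of_kkt (hCsym : C.IsSymm) (hK : (kernelK C).PosDef) {α : Fin d → ℝ}
    (hα : α ∈ simplexS d) (t : ℝ)
    (heq : ∀ i, 0 < α i → wv f i * Sv C f α i = t)
    (hle : ∀ i, α i = 0 → t ≤ wv f i * Sv C f α i) :
    ∀ β ∈ simplexS d, β ≠ α → Phi C α f < Phi C β f := by
  intro β hβ hne
  have hβα : α + (β - α) = β := by ring
  have hexp : Phi C β f
      = Phi C α f + 2 * Bq C f α (β - α) + Bq C f (β - α) (β - α) := by
    have h := Bq_add C f α (β - α)
    rw [hβα] at h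
    rw [phi_eq, phi_eq, h, Bq_symm C f hCsym (β - α) α]
    ring
  have h1 : ∑ k, α k * (wv f k * Sv C f α k) = t := by
    have h : ∀ k ∈ Finset.univ, α k * (wv f k * Sv C f α k) = α k * t := by
      intro k _
      rcases (hα.1 k).eq_or_lt with h | h
      · rw [← h]; ring
      · rw [heq k h]
    rw [Finset.sum_congr rfl h, ← Finset.sum_mul, hα.2, one_mul]
  have h2 : t ≤ ∑ k, β k * (wv f k * Sv C f α k) := by
    have hstep : ∀ k ∈ Finset.univ, β k * t ≤ β k * (wv f k * Sv C f α k) := by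
      intro k _
      rcases (hα.1 k).eq_or_lt with h | h
      · exact mul_le_mul_of_nonneg_left (hle k h.symm) (hβ.1 k)
      · rw [heq k h]
    calc t = ∑ k, β k * t := by rw [← Finset.sum_mul, hβ.2, one_mul]
    _ ≤ _ := Finset.sum_le_sum hstep
  have hkey : 0 ≤ Bq C f α (β - α) := by
    rw [Bq_right C f hCsym]
    have : ∑ k, (β - α) k * (wv f k * Sv C f α k)
        = (∑ k, β k * (wv f k * Sv C f α k)) - ∑ k, α k * (wv f k * Sv C f α k) := by
      rw [← Finset.sum_sub_distrib]
      exact Finset.sum_congr rfl fun k _ => by simp only [Pi.sub_apply]; ring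
    rw [this, h1]
    linarith
  have hpos : 0 < Bq C f (β - α) (β - α) := Bq_pos C f hK (sub_ne_zero.mpr hne)
  rw [hexp]
  linarith

end GsoftmaxAux

/-- First-order optimality characterization of the geometric softmax: `α ∈ △^d` equals
`g-softmax(f)` iff there is `A ∈ ℝ` with `(f_i + T(-f,α)_i)/2 = A` on the support of `α`
and `(f_i + T(-f,α)_i)/2 ≤ A` off the support; moreover in that case `A = Ω_C^*(f)`. -/
theorem gsoftmax_first_order_characterization (d : ℕ) (hd : 1 ≤ d)
    (C : Matrix (Fin d) (Fin d) ℝ) (hCsym : C.IsSymm) (hCdiag : ∀ i, C i i = 0)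
    (hK : (kernelK C).PosDef) (f : Fin d → ℝ) (α : Fin d → ℝ) (hα : α ∈ simplexS d) :
    (α = gsoftmax C f ↔
      ∃ A : ℝ, (∀ i, 0 < α i → (f i + Tsoft C (-f) α i) / 2 = A) ∧
        (∀ i, α i = 0 → (f i + Tsoft C (-f) α i) / 2 ≤ A)) ∧
    (α = gsoftmax C f →
      (∀ i, 0 < α i → (f i + Tsoft C (-f) α i) / 2 = OmegaStar C f) ∧
      (∀ i, α i = 0 → (f i + Tsoft C (-f) α i) / 2 ≤ OmegaStar C f)) := by
  classical
  have hcont : Continuous fun β : Fin d → ℝ => Phi C β f := by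
    unfold Phi
    exact continuous_finset_sum _ fun i _ => continuous_finset_sum _ fun j _ => by fun_prop
  have hex : ∃ β ∈ simplexS d, IsMinOn (fun β => Phi C β f) (simplexS d) β :=
    (isCompact_stdSimplex ℝ (Fin d)).exists_isMinOn ⟨α, hα⟩ hcont.continuousOn
  have hgdef : gsoftmax C f = hex.choose := dif_pos hex
  obtain ⟨hgs0, hgmin0⟩ := hex.choose_spec
  have hgs' : gsoftmax C f ∈ simplexS d := by rw [hgdef]; exact hgs0
  have hgmin' : IsMinOn (fun β => Phi C β f) (simplexS d) (gsoftmax C f) := by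
    rw [hgdef]; exact hgmin0
  have fwd : α = gsoftmax C f →
      (∀ i, 0 < α i → (f i + Tsoft C (-f) α i) / 2 = -Real.log (Phi C α f)) ∧
      (∀ i, α i = 0 → (f i + Tsoft C (-f) α i) / 2 ≤ -Real.log (Phi C α f)) := by
    intro h
    have hminα : IsMinOn (fun β => Phi C β f) (simplexS d) α := by rw [h]; exact hgmin'
    obtain ⟨h1, h2⟩ := GsoftmaxAux.min_char C f hCsym hα hminα
    refine ⟨fun i hi => ?_, fun i hi => ?_⟩
    · rw [GsoftmaxAux.Tsoft_eq C f hα i, h1 i hi]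
    · rw [GsoftmaxAux.Tsoft_eq C f hα i]
      exact neg_le_neg (Real.log_le_log (GsoftmaxAux.phi_pos C f hK hα) (h2 i hi))
  have hOmega : α = gsoftmax C f → OmegaStar C f = -Real.log (Phi C α f) := by
    intro h
    have hminα : IsMinOn (fun β => Phi C β f) (simplexS d) α := by rw [h]; exact hgmin'
    have hleast : IsLeast ((fun β => Phi C β f) '' simplexS d) (Phi C α f) :=
      ⟨⟨α, hα, rfl⟩, by rintro y ⟨β, hβ, rfl⟩; exact isMinOn_iff.mp hminα β hβ⟩
    unfold OmegaStar
    rw [hleast.csInf_eq]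
  refine ⟨⟨fun h => ?_, fun hkkt => ?_⟩, fun h => ?_⟩
  · obtain ⟨h1, h2⟩ := fwd h
    exact ⟨-Real.log (Phi C α f), h1, h2⟩
  · obtain ⟨A, hA1, hA2⟩ := hkkt
    have hgpos : ∀ i, 0 < GsoftmaxAux.wv f i * GsoftmaxAux.Sv C f α i := fun i =>
      mul_pos (GsoftmaxAux.wv_pos f i) (GsoftmaxAux.Sv_pos C f hα i)
    have heq : ∀ i, 0 < α i →
        GsoftmaxAux.wv f i * GsoftmaxAux.Sv C f α i = Real.exp (-A) := by
      intro i hi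
      have h := hA1 i hi
      rw [GsoftmaxAux.Tsoft_eq C f hα i] at h
      have hlog : Real.log (GsoftmaxAux.wv f i * GsoftmaxAux.Sv C f α i) = -A := by linarith
      rw [← Real.exp_log (hgpos i), hlog]
    have hle : ∀ i, α i = 0 →
        Real.exp (-A) ≤ GsoftmaxAux.wv f i * GsoftmaxAux.Sv C f α i := by
      intro i hi
      have h := hA2 i hi
      rw [GsoftmaxAux.Tsoft_eq C f hα i] at h
      have hlog : -A ≤ Real.log (GsoftmaxAux.wv f i * GsoftmaxAux.Sv C f α i) := by linarith
      calc Real.exp (-A) ≤ Real.exp (Real.log (GsoftmaxAux.wv f i * GsoftmaxAux.Sv C f α i)) :=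
            Real.exp_le_exp.mpr hlog
        _ = _ := Real.exp_log (hgpos i)
    have hstrict := GsoftmaxAux.min_of_kkt C f hCsym hK hα (Real.exp (-A)) heq hle
    by_contra hne
    have hlt := hstrict (gsoftmax C f) hgs' (fun e => hne e.symm)
    have hge := isMinOn_iff.mp hgmin' α hα
    linarith
  · obtain ⟨h1, h2⟩ := fwd h
    rw [hOmega h]
    exact ⟨h1, h2⟩
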